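/- Let μ be a finite positive Borel measure on (0,∞) (so that H_μ is bounded on A^2(𝕌)). Then for all f, g ∈ A^2(𝕌), ⟨H_μ(f), g⟩ = ⟨f, H_μ^*(g)⟩, where ⟨u, v⟩ = (1/π)∫_𝕌 u(z) conj(v(z)) dA(z) and H_μ^*(g)(z) = ∫_0^∞ t g(tz) dμ(t); that is, the Hilbert-space adjoint of H_μ on A^2(𝕌) is the quasi-Hausdorff operator H_μ^*. -/

import Mathlib

open MeasureTheory Complex Set Filter
open scoped ENNReal NNReal Topology Real

noncomputable section

/-- The upper half plane `{z : ℂ | Im z > 0}`. -/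
def UHP : Set ℂ := {z : ℂ | 0 < z.im}

/-- The `p`-th power of the Bergman `A^p(UHP)` norm: `(1/π) ∫_UHP |f|^p dA`. -/
def apNormPow (p : ℝ) (f : ℂ → ℂ) : ℝ≥0∞ :=
  ENNReal.ofReal (1 / Real.pi) * ∫⁻ z in UHP, (‖f z‖₊ : ℝ≥0∞) ^ p

/-- The Bergman `A^p(UHP)` norm: `((1/π) ∫_UHP |f|^p dA)^(1/p)`. -/
def apNorm (p : ℝ) (f : ℂ → ℂ) : ℝ≥0∞ := apNormPow p f ^ (1 / p)

/-- Membership in the Bergman space `A^p(UHP)`: holomorphic on `UHP` with finite norm. -/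
def MemAp (p : ℝ) (f : ℂ → ℂ) : Prop :=
  DifferentiableOn ℂ f UHP ∧ apNormPow p f < ⊤

/-- The Hausdorff operator `H_μ f z = ∫_0^∞ (1/t) f(z/t) dμ(t)`. -/
def hausdorffOp (μ : Measure ℝ) (f : ℂ → ℂ) (z : ℂ) : ℂ :=
  ∫ t in Ioi (0:ℝ), (t : ℂ)⁻¹ * f (z / (t : ℂ)) ∂μ

/-- The quasi-Hausdorff operator `H_μ^* f z = ∫_0^∞ t f(tz) dμ(t)`. -/
def quasiHausdorff (μ : Measure ℝ) (f : ℂ → ℂ) (z : ℂ) : ℂ :=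
  ∫ t in Ioi (0:ℝ), (t : ℂ) * f ((t : ℂ) * z) ∂μ

section Aux
open scoped Pointwise

lemma isOpen_UHP : IsOpen UHP := isOpen_lt continuous_const Complex.continuous_im

lemma mem_UHP_mul {t : ℝ} (ht : 0 < t) (z : ℂ) : (t:ℂ) * z ∈ UHP ↔ z ∈ UHP := by
  simp only [UHP, mem_setOf_eq, Complex.mul_im, Complex.ofReal_re, Complex.ofReal_im,
    zero_mul, add_zero]
  exact mul_pos_iff_of_pos_left ht

lemma smul_UHP {t : ℝ} (ht : 0 < t) : t • UHP = UHP := by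
  ext z
  rw [mem_smul_set_iff_inv_smul_mem₀ ht.ne']
  rw [show t⁻¹ • z = ((t⁻¹ : ℝ) : ℂ) * z from Complex.real_smul]
  exact mem_UHP_mul (inv_pos.2 ht) z

lemma lint_scale' {t : ℝ} (ht : 0 < t) (h : ℂ → ℝ≥0∞) :
    ∫⁻ w in UHP, h ((t:ℂ) * w) = ENNReal.ofReal (t^2)⁻¹ * ∫⁻ z in UHP, h z := by
  have hU := isOpen_UHP.measurableSet
  let e : ℂ ≃ᵐ ℂ := (Homeomorph.smul (Units.mk0 t ht.ne')).toMeasurableEquiv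
  have h1 : ∀ w : ℂ, UHP.indicator h ((t:ℂ) * w) = UHP.indicator (fun w => h ((t:ℂ)*w)) w := by
    intro w
    by_cases hw : w ∈ UHP
    · rw [indicator_of_mem hw, indicator_of_mem ((mem_UHP_mul ht w).2 hw)]
    · rw [indicator_of_notMem hw, indicator_of_notMem (fun hc => hw ((mem_UHP_mul ht w).1 hc))]
  have h2 : ∀ w : ℂ, e w = (t:ℂ) * w := fun w => Complex.real_smul
  calc ∫⁻ w in UHP, h ((t:ℂ) * w)
      = ∫⁻ w, UHP.indicator (fun w => h ((t:ℂ)*w)) w := (lintegral_indicator hU _).symm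
    _ = ∫⁻ w, UHP.indicator h (e w) := by
        refine lintegral_congr fun w => ?_
        rw [h2 w, h1 w]
    _ = ∫⁻ z, UHP.indicator h z ∂(Measure.map e volume) := (lintegral_map_equiv _ e).symm
    _ = ENNReal.ofReal (t^2)⁻¹ * ∫⁻ z in UHP, h z := by
        have : Measure.map e volume = ENNReal.ofReal |(t ^ 2)⁻¹| • volume := by
          have := MeasureTheory.Measure.map_addHaar_smul (volume : Measure ℂ) ht.ne'
          rw [Complex.finrank_real_complex] at this
          convert this using 2 <;> rfl
        rw [this, lintegral_smul_measure, lintegral_indicator hU _,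
          _root_.abs_of_nonneg (by positivity), smul_eq_mul]

lemma lint_scale {t : ℝ} (ht : 0 < t) (h : ℂ → ℝ≥0∞) :
    ∫⁻ z in UHP, h z = ENNReal.ofReal (t^2) * ∫⁻ w in UHP, h ((t:ℂ) * w) := by
  rw [lint_scale' ht h, ← mul_assoc, ← ENNReal.ofReal_mul (by positivity)]
  rw [mul_inv_cancel₀ (by positivity), ENNReal.ofReal_one, one_mul]

lemma int_scale {t : ℝ} (ht : 0 < t) (φ : ℂ → ℂ) :
    ∫ z in UHP, φ z = (t^2 : ℝ) • ∫ w in UHP, φ ((t:ℂ) * w) := by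
  have := MeasureTheory.Measure.setIntegral_comp_smul_of_pos (volume : Measure ℂ) φ UHP ht
  rw [Complex.finrank_real_complex, smul_UHP ht] at this
  simp_rw [show ∀ w : ℂ, t • w = (t:ℂ) * w from fun w => Complex.real_smul] at this
  rw [this, smul_smul, mul_inv_cancel₀ (by positivity), one_smul]

lemma conj22 : (2:ℝ).HolderConjugate 2 := Real.HolderConjugate.two_two

lemma aesm_scale {f : ℂ → ℂ} (hfc : ContinuousOn f UHP) {t : ℝ} (ht : 0 < t) :
    AEStronglyMeasurable (fun w => f ((t:ℂ) * w)) (volume.restrict UHP) := by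
  refine (hfc.comp ((continuous_const.mul continuous_id).continuousOn)
    (fun w hw => (mem_UHP_mul ht w).2 hw)).aestronglyMeasurable isOpen_UHP.measurableSet

lemma nn_t_mul_inv {t : ℝ} (ht : 0 < t) :
    (‖(t:ℂ)⁻¹‖₊ : ℝ≥0∞) * (‖(t:ℂ)‖₊ : ℝ≥0∞) = 1 := by
  rw [← ENNReal.coe_mul, ← nnnorm_mul, inv_mul_cancel₀ (Complex.ofReal_ne_zero.2 ht.ne')]
  simp

lemma ofReal_sq_eq {t : ℝ} (ht : 0 < t) :
    ENNReal.ofReal (t^2) = (‖(t:ℂ)‖₊ : ℝ≥0∞) ^ (2:ℝ) := by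
  have h1 : (‖(t:ℂ)‖₊ : ℝ≥0∞) = ENNReal.ofReal t := by
    rw [← enorm_eq_nnnorm, ← ofReal_norm, Complex.norm_real, Real.norm_eq_abs, _root_.abs_of_pos ht]
  rw [h1, ENNReal.ofReal_rpow_of_pos ht]
  congr 1
  rw [show ((2:ℝ)) = ((2:ℕ):ℝ) by norm_num, Real.rpow_natCast]

lemma boundF {f g : ℂ → ℂ} (hfc : ContinuousOn f UHP) (hgc : ContinuousOn g UHP)
    {t : ℝ} (ht : 0 < t) :
    ∫⁻ z in UHP, (‖(t:ℂ)⁻¹ * f (z / (t:ℂ)) * (starRingEnd ℂ) (g z)‖₊ : ℝ≥0∞)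
      ≤ (∫⁻ z in UHP, (‖f z‖₊:ℝ≥0∞) ^ (2:ℝ)) ^ (1/2:ℝ) *
        (∫⁻ z in UHP, (‖g z‖₊:ℝ≥0∞) ^ (2:ℝ)) ^ (1/2:ℝ) := by
  have htc : (t:ℂ) ≠ 0 := Complex.ofReal_ne_zero.2 ht.ne'
  set c := (‖(t:ℂ)⁻¹‖₊ : ℝ≥0∞)
  set d := (‖(t:ℂ)‖₊ : ℝ≥0∞)
  set a : ℂ → ℝ≥0∞ := fun z => (‖f (z / (t:ℂ))‖₊ : ℝ≥0∞)
  set b : ℂ → ℝ≥0∞ := fun z => (‖g z‖₊ : ℝ≥0∞)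
  have hdiv : ∀ z : ℂ, z / (t:ℂ) = ((t⁻¹:ℝ):ℂ) * z := by
    intro z; push_cast; rw [div_eq_inv_mul]
  have ha : AEMeasurable a (volume.restrict UHP) := by
    have : AEStronglyMeasurable (fun z => f (z / (t:ℂ))) (volume.restrict UHP) := by
      simp_rw [hdiv]; exact aesm_scale hfc (inv_pos.2 ht)
    exact this.enorm
  have hb : AEMeasurable b (volume.restrict UHP) :=
    (hgc.aestronglyMeasurable isOpen_UHP.measurableSet).enorm
  have key : ∫⁻ z in UHP, a z ^ (2:ℝ) = d ^ (2:ℝ) * ∫⁻ z in UHP, (‖f z‖₊:ℝ≥0∞) ^ (2:ℝ) := by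
    have := lint_scale ht (fun z => a z ^ (2:ℝ))
    simp only [a] at this ⊢
    rw [this, ← ofReal_sq_eq ht]
    congr 1
    refine lintegral_congr fun w => ?_
    rw [mul_div_cancel_left₀ _ htc]
  calc ∫⁻ z in UHP, (‖(t:ℂ)⁻¹ * f (z / (t:ℂ)) * (starRingEnd ℂ) (g z)‖₊ : ℝ≥0∞)
      = ∫⁻ z in UHP, c * (a z * b z) := by
        refine lintegral_congr fun z => ?_
        simp only [nnnorm_mul, ENNReal.coe_mul, RCLike.nnnorm_conj, mul_assoc, a, b, c]
    _ = c * ∫⁻ z in UHP, (a * b) z := by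
        rw [lintegral_const_mul' c _ ENNReal.coe_ne_top]; rfl
    _ ≤ c * ((∫⁻ z in UHP, a z ^ (2:ℝ)) ^ (1/(2:ℝ)) * (∫⁻ z in UHP, b z ^ (2:ℝ)) ^ (1/(2:ℝ))) := by
        exact mul_le_mul_right (ENNReal.lintegral_mul_le_Lp_mul_Lq _ conj22 ha hb) c
    _ = (∫⁻ z in UHP, (‖f z‖₊:ℝ≥0∞) ^ (2:ℝ)) ^ (1/2:ℝ) *
        (∫⁻ z in UHP, (‖g z‖₊:ℝ≥0∞) ^ (2:ℝ)) ^ (1/2:ℝ) := by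
        rw [key, ENNReal.mul_rpow_of_nonneg _ _ (by norm_num : (0:ℝ) ≤ 1/2),
          ← ENNReal.rpow_mul]
        norm_num
        rw [← mul_assoc, ← mul_assoc, nn_t_mul_inv ht, one_mul]

lemma boundG {f g : ℂ → ℂ} (hfc : ContinuousOn f UHP) (hgc : ContinuousOn g UHP)
    {t : ℝ} (ht : 0 < t) :
    ∫⁻ w in UHP, (‖f w * (starRingEnd ℂ) ((t:ℂ) * g ((t:ℂ) * w))‖₊ : ℝ≥0∞)
      ≤ (∫⁻ z in UHP, (‖f z‖₊:ℝ≥0∞) ^ (2:ℝ)) ^ (1/2:ℝ) *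
        (∫⁻ z in UHP, (‖g z‖₊:ℝ≥0∞) ^ (2:ℝ)) ^ (1/2:ℝ) := by
  set d := (‖(t:ℂ)‖₊ : ℝ≥0∞) with hd
  set a : ℂ → ℝ≥0∞ := fun w => (‖f w‖₊ : ℝ≥0∞)
  set b : ℂ → ℝ≥0∞ := fun w => (‖(t:ℂ) * g ((t:ℂ) * w)‖₊ : ℝ≥0∞)
  have ha : AEMeasurable a (volume.restrict UHP) :=
    (hfc.aestronglyMeasurable isOpen_UHP.measurableSet).enorm
  have hb : AEMeasurable b (volume.restrict UHP) :=
    ((aesm_scale hgc ht).const_mul ((t:ℂ))).enorm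
  have key : ∫⁻ w in UHP, b w ^ (2:ℝ) = ∫⁻ z in UHP, (‖g z‖₊:ℝ≥0∞) ^ (2:ℝ) := by
    have h1 : ∀ w, b w ^ (2:ℝ) = d ^ (2:ℝ) * (‖g ((t:ℂ) * w)‖₊ : ℝ≥0∞) ^ (2:ℝ) := by
      intro w
      simp only [b, nnnorm_mul, ENNReal.coe_mul, d]
      rw [ENNReal.mul_rpow_of_nonneg _ _ (by norm_num : (0:ℝ) ≤ 2)]
    simp_rw [h1]
    rw [lintegral_const_mul' _ _ (ENNReal.rpow_ne_top_of_nonneg (by norm_num) ENNReal.coe_ne_top),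
      lint_scale' ht (fun z => (‖g z‖₊:ℝ≥0∞) ^ (2:ℝ)), ← hd, ← ofReal_sq_eq ht, ← mul_assoc,
      ← ENNReal.ofReal_mul (by positivity), mul_inv_cancel₀ (by positivity), ENNReal.ofReal_one,
      one_mul]
  calc ∫⁻ w in UHP, (‖f w * (starRingEnd ℂ) ((t:ℂ) * g ((t:ℂ) * w))‖₊ : ℝ≥0∞)
      = ∫⁻ w in UHP, (a * b) w := by
        refine lintegral_congr fun w => ?_
        simp only [nnnorm_mul, ENNReal.coe_mul, RCLike.nnnorm_conj, a, b, Pi.mul_apply]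
    _ ≤ (∫⁻ w in UHP, a w ^ (2:ℝ)) ^ (1/(2:ℝ)) * (∫⁻ w in UHP, b w ^ (2:ℝ)) ^ (1/(2:ℝ)) :=
        ENNReal.lintegral_mul_le_Lp_mul_Lq _ conj22 ha hb
    _ = _ := by rw [key]

end Aux

theorem stmt15 (μ : Measure ℝ) [IsFiniteMeasure μ]
    (f g : ℂ → ℂ) (hf : MemAp 2 f) (hg : MemAp 2 g) :
    (1 / (Real.pi : ℂ)) * ∫ z in UHP, hausdorffOp μ f z * (starRingEnd ℂ) (g z) =
    (1 / (Real.pi : ℂ)) * ∫ z in UHP, f z * (starRingEnd ℂ) (quasiHausdorff μ g z) := by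
  have hU : MeasurableSet UHP := isOpen_UHP.measurableSet
  have hfc : ContinuousOn f UHP := hf.1.continuousOn
  have hgc : ContinuousOn g UHP := hg.1.continuousOn
  set A := ∫⁻ z in UHP, (‖f z‖₊:ℝ≥0∞) ^ (2:ℝ) with hA
  set B := ∫⁻ z in UHP, (‖g z‖₊:ℝ≥0∞) ^ (2:ℝ) with hB
  have hπ : ENNReal.ofReal (1/Real.pi) ≠ 0 := by
    rw [Ne, ENNReal.ofReal_eq_zero, not_le]
    positivity
  have hAlt : A ≠ ⊤ := by
    intro hc
    have := hf.2
    rw [apNormPow, ← hA, hc, ENNReal.mul_top hπ] at this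
    exact lt_irrefl _ this
  have hBlt : B ≠ ⊤ := by
    intro hc
    have := hg.2
    rw [apNormPow, ← hB, hc, ENNReal.mul_top hπ] at this
    exact lt_irrefl _ this
  set C := A ^ (1/2:ℝ) * B ^ (1/2:ℝ) with hC
  have hClt : C ≠ ⊤ :=
    ENNReal.mul_ne_top (ENNReal.rpow_ne_top_of_nonneg (by norm_num) hAlt)
      (ENNReal.rpow_ne_top_of_nonneg (by norm_num) hBlt)
  set F : ℝ → ℂ → ℂ := fun t z => (t:ℂ)⁻¹ * f (z / (t:ℂ)) * (starRingEnd ℂ) (g z) with hFdef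
  set G : ℝ → ℂ → ℂ := fun t w => f w * (starRingEnd ℂ) ((t:ℂ) * g ((t:ℂ) * w)) with hGdef
  -- measurability on the product space
  have hprod : (μ.restrict (Ioi 0)).prod (volume.restrict UHP)
      = (μ.prod volume).restrict ((Ioi (0:ℝ)) ×ˢ UHP) :=
    Measure.prod_restrict _ _
  have hFsm : AEStronglyMeasurable (Function.uncurry F)
      ((μ.restrict (Ioi 0)).prod (volume.restrict UHP)) := by
    rw [hprod]
    refine ContinuousOn.aestronglyMeasurable ?_ (measurableSet_Ioi.prod hU)
    refine ContinuousOn.mul (ContinuousOn.mul ?_ ?_) ?_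
    · exact ((Complex.continuous_ofReal.comp continuous_fst).continuousOn).inv₀
        (fun p hp => Complex.ofReal_ne_zero.2 (ne_of_gt hp.1))
    · refine hfc.comp ?_ ?_
      · exact (continuous_snd.continuousOn).div
          ((Complex.continuous_ofReal.comp continuous_fst).continuousOn)
          (fun p hp => Complex.ofReal_ne_zero.2 (ne_of_gt hp.1))
      · intro p hp
        have : (p.2 / (p.1:ℂ)).im = p.2.im / p.1 := Complex.div_ofReal_im _ _
        simp only [UHP, mem_setOf_eq, this]
        exact div_pos hp.2 hp.1
    · exact continuous_star.comp_continuousOn (hgc.comp continuous_snd.continuousOn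
        (fun p hp => hp.2))
  have hGsm : AEStronglyMeasurable (Function.uncurry G)
      ((μ.restrict (Ioi 0)).prod (volume.restrict UHP)) := by
    rw [hprod]
    refine ContinuousOn.aestronglyMeasurable ?_ (measurableSet_Ioi.prod hU)
    refine ContinuousOn.mul (hfc.comp continuous_snd.continuousOn (fun p hp => hp.2)) ?_
    refine continuous_star.comp_continuousOn (ContinuousOn.mul
      ((Complex.continuous_ofReal.comp continuous_fst).continuousOn) (hgc.comp ?_ ?_))
    · exact ((Complex.continuous_ofReal.comp continuous_fst).mul continuous_snd).continuousOn
    · intro p hp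
      exact (mem_UHP_mul hp.1 p.2).2 hp.2
  -- a.e. positivity of t
  have haet : ∀ᵐ t ∂(μ.restrict (Ioi (0:ℝ))), t ∈ Ioi (0:ℝ) := ae_restrict_mem measurableSet_Ioi
  -- integrability on the product space
  have hFint : Integrable (Function.uncurry F)
      ((μ.restrict (Ioi 0)).prod (volume.restrict UHP)) := by
    refine ⟨hFsm, ?_⟩
    have hfin : (∫⁻ p, (‖Function.uncurry F p‖₊ : ℝ≥0∞)
        ∂((μ.restrict (Ioi 0)).prod (volume.restrict UHP))) < ⊤ := by
      rw [lintegral_prod (fun p => (‖Function.uncurry F p‖₊ : ℝ≥0∞)) hFsm.enorm]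
      calc ∫⁻ t, ∫⁻ z, (‖Function.uncurry F (t, z)‖₊ : ℝ≥0∞)
            ∂(volume.restrict UHP) ∂(μ.restrict (Ioi 0))
          ≤ ∫⁻ _, C ∂(μ.restrict (Ioi 0)) := by
            refine lintegral_mono_ae (haet.mono fun t ht => ?_)
            exact boundF hfc hgc ht
        _ = C * (μ.restrict (Ioi 0)) univ := lintegral_const C
        _ < ⊤ := ENNReal.mul_lt_top hClt.lt_top (measure_lt_top _ univ)
    exact hfin
  have hGint : Integrable (Function.uncurry G)
      ((μ.restrict (Ioi 0)).prod (volume.restrict UHP)) := by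
    refine ⟨hGsm, ?_⟩
    have hfin : (∫⁻ p, (‖Function.uncurry G p‖₊ : ℝ≥0∞)
        ∂((μ.restrict (Ioi 0)).prod (volume.restrict UHP))) < ⊤ := by
      rw [lintegral_prod (fun p => (‖Function.uncurry G p‖₊ : ℝ≥0∞)) hGsm.enorm]
      calc ∫⁻ t, ∫⁻ w, (‖Function.uncurry G (t, w)‖₊ : ℝ≥0∞)
            ∂(volume.restrict UHP) ∂(μ.restrict (Ioi 0))
          ≤ ∫⁻ _, C ∂(μ.restrict (Ioi 0)) := by
            refine lintegral_mono_ae (haet.mono fun t ht => ?_)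
            exact boundG hfc hgc ht
        _ = C * (μ.restrict (Ioi 0)) univ := lintegral_const C
        _ < ⊤ := ENNReal.mul_lt_top hClt.lt_top (measure_lt_top _ univ)
    exact hfin
  congr 1
  calc ∫ z in UHP, hausdorffOp μ f z * (starRingEnd ℂ) (g z)
      = ∫ z in UHP, ∫ t in Ioi (0:ℝ), F t z ∂μ := by
        refine integral_congr_ae (Eventually.of_forall fun z => ?_)
        show hausdorffOp μ f z * (starRingEnd ℂ) (g z) = _
        rw [hausdorffOp, ← integral_mul_const]
    _ = ∫ t in Ioi (0:ℝ), ∫ z in UHP, F t z ∂volume ∂μ := (integral_integral_swap hFint).symm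
    _ = ∫ t in Ioi (0:ℝ), ∫ w in UHP, G t w ∂volume ∂μ := by
        refine integral_congr_ae (haet.mono fun t ht => ?_)
        have ht' : (0:ℝ) < t := ht
        have htc : (t:ℂ) ≠ 0 := Complex.ofReal_ne_zero.2 (ne_of_gt ht')
        show (∫ z in UHP, F t z) = ∫ w in UHP, G t w
        rw [int_scale ht' (F t), ← integral_smul]
        refine integral_congr_ae (Eventually.of_forall fun w => ?_)
        show (t^2 : ℝ) • F t ((t:ℂ) * w) = G t w
        simp only [hFdef, hGdef, mul_div_cancel_left₀ _ htc]
        rw [Complex.real_smul, map_mul, Complex.conj_ofReal]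
        push_cast
        field_simp
    _ = ∫ w in UHP, ∫ t in Ioi (0:ℝ), G t w ∂μ ∂volume := integral_integral_swap hGint
    _ = ∫ z in UHP, f z * (starRingEnd ℂ) (quasiHausdorff μ g z) := by
        refine integral_congr_ae (Eventually.of_forall fun w => ?_)
        show _ = f w * (starRingEnd ℂ) (quasiHausdorff μ g w)
        rw [quasiHausdorff, ← integral_conj, ← integral_const_mul]
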